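/- Let γ ∈ (1,2), p(z) = c_γ|z|^{-(1+γ)} for z ≠ 0, p(0)=0, and for z ∈ {1,…,N−1} define φ_N(z/N) = −(z/N) N^γ ∑_{y≥z} p(y) + (1 − 1/N − z/N) N^γ ∑_{y ≥ N−z} p(y) + N^{γ−1}(∑_{y≥z} y p(y) − ∑_{y ≥ N−z} y p(y)). Then there is a constant C > 0, independent of N and z, such that |φ_N(z/N)| ≤ C((z/N)^{1−γ} + (1 − z/N)^{1−γ}). -/

import Mathlib

open Finset

private lemma one_step {s : ℝ} (hs : 0 < s) {a : ℝ} (ha : 1 ≤ a) :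
    s * (a + 1) ^ (-(1 + s)) ≤ a ^ (-s) - (a + 1) ^ (-s) := by
  have ha0 : (0 : ℝ) < a := lt_of_lt_of_le one_pos ha
  have hlt : a < a + 1 := by linarith
  have hcont : ContinuousOn (fun x : ℝ => x ^ (-s)) (Set.Icc a (a + 1)) := by
    refine ContinuousOn.rpow_const continuousOn_id fun x hx => Or.inl ?_
    exact (lt_of_lt_of_le ha0 hx.1).ne'
  have hderiv : ∀ x ∈ Set.Ioo a (a + 1),
      HasDerivAt (fun x : ℝ => x ^ (-s)) ((-s) * x ^ (-s - 1)) x := by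
    intro x hx
    exact Real.hasDerivAt_rpow_const (Or.inl (lt_of_lt_of_le ha0 hx.1.le).ne')
  obtain ⟨ξ, hξ, hξ'⟩ := exists_hasDerivAt_eq_slope (fun x : ℝ => x ^ (-s))
    (fun x => (-s) * x ^ (-s - 1)) hlt hcont hderiv
  have hξ0 : (0 : ℝ) < ξ := lt_trans ha0 hξ.1
  have hslope : a ^ (-s) - (a + 1) ^ (-s) = s * ξ ^ (-s - 1) := by
    have h1 : a + 1 - a = 1 := by ring
    rw [h1, div_one] at hξ'
    linarith [hξ']
  rw [hslope]
  have hmono : (a + 1) ^ (-s - 1) ≤ ξ ^ (-s - 1) :=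
    Real.rpow_le_rpow_of_nonpos hξ0 hξ.2.le (by linarith)
  have he : -(1 + s) = -s - 1 := by ring
  rw [he]
  exact mul_le_mul_of_nonneg_left hmono hs.le

private lemma partial_tail {s : ℝ} (hs : 0 < s) {z : ℕ} (hz : 1 ≤ z) :
    ∀ m : ℕ, ∑ i ∈ Finset.range (m + 1), ((z + i : ℕ) : ℝ) ^ (-(1 + s))
      ≤ (z : ℝ) ^ (-s) + (1 / s) * (z : ℝ) ^ (-s) - (1 / s) * ((z + m : ℕ) : ℝ) ^ (-s) := by
  have hz1 : (1 : ℝ) ≤ (z : ℝ) := by exact_mod_cast hz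
  intro m
  induction m with
  | zero =>
    have h1 : ((z : ℕ) : ℝ) ^ (-(1 + s)) ≤ (z : ℝ) ^ (-s) :=
      Real.rpow_le_rpow_of_exponent_le hz1 (by linarith)
    simpa using h1
  | succ m ih =>
    rw [Finset.sum_range_succ]
    have ha : (1 : ℝ) ≤ ((z + m : ℕ) : ℝ) := by
      have : 1 ≤ z + m := le_trans hz (Nat.le_add_right z m)
      exact_mod_cast this
    have key := one_step hs ha
    have hcast : ((z + (m + 1) : ℕ) : ℝ) = ((z + m : ℕ) : ℝ) + 1 := by push_cast; ring
    have hstep : ((z + (m + 1) : ℕ) : ℝ) ^ (-(1 + s))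
        ≤ (1 / s) * ((z + m : ℕ) : ℝ) ^ (-s) - (1 / s) * ((z + (m + 1) : ℕ) : ℝ) ^ (-s) := by
      rw [hcast]
      have h1 := mul_le_mul_of_nonneg_left key (by positivity : (0:ℝ) ≤ 1 / s)
      have h2 : (1 / s) * (s * (((z + m : ℕ) : ℝ) + 1) ^ (-(1 + s)))
          = (((z + m : ℕ) : ℝ) + 1) ^ (-(1 + s)) := by field_simp
      rw [h2, mul_sub] at h1
      exact h1
    linarith

private lemma tail_bound {s : ℝ} (hs : 0 < s) {z : ℕ} (hz : 1 ≤ z) :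
    ∑' y : ℕ, (if z ≤ y then ((y : ℝ)) ^ (-(1 + s)) else 0) ≤ (1 + 1 / s) * (z : ℝ) ^ (-s) := by
  apply Real.tsum_le_of_sum_range_le
  · intro n; split_ifs with h
    · positivity
    · exact le_refl 0
  · intro n
    have hfilter : (Finset.range n).filter (fun y => z ≤ y) = Finset.Ico z n := by
      ext y
      simp [Finset.mem_filter, Finset.mem_range, Finset.mem_Ico, and_comm]
    have hsum : ∑ y ∈ Finset.range n, (if z ≤ y then ((y : ℝ)) ^ (-(1 + s)) else 0)
        = ∑ i ∈ Finset.range (n - z), ((z + i : ℕ) : ℝ) ^ (-(1 + s)) := by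
      rw [Finset.sum_ite, Finset.sum_const_zero, add_zero, hfilter,
        Finset.sum_Ico_eq_sum_range]
    rw [hsum]
    rcases Nat.eq_zero_or_pos (n - z) with h | h
    · rw [h]; simp; positivity
    · obtain ⟨m, hm⟩ := Nat.exists_eq_succ_of_ne_zero h.ne'
      rw [hm]
      have := partial_tail hs hz m
      have hq : (0 : ℝ) ≤ (1 / s) * ((z + m : ℕ) : ℝ) ^ (-s) := by positivity
      have hexp : (1 + 1 / s) * (z : ℝ) ^ (-s)
          = (z : ℝ) ^ (-s) + (1 / s) * (z : ℝ) ^ (-s) := by ring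
      linarith

private lemma rpow_helper {a n t : ℝ} (ha : 0 < a) (hn : 0 < n) :
    (a / n) ^ (1 - t) = (a / n) * n ^ t * a ^ (-t) := by
  have h1 : a ^ t ≠ 0 := ne_of_gt (Real.rpow_pos_of_pos ha t)
  have h2 : n ^ t ≠ 0 := ne_of_gt (Real.rpow_pos_of_pos hn t)
  rw [Real.rpow_sub (div_pos ha hn), Real.rpow_one, Real.div_rpow ha.le hn.le,
    Real.rpow_neg ha.le]
  field_simp

private lemma rpow_helper2 {a n t : ℝ} (ha : 0 < a) (hn : 0 < n) :
    (a / n) ^ (1 - t) = a ^ (1 - t) * n ^ (t - 1) := by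
  rw [Real.div_rpow ha.le hn.le, div_eq_mul_inv, ← Real.rpow_neg hn.le]
  congr 1
  ring

theorem stmt_19 (γ c : ℝ) (hγ : γ ∈ Set.Ioo (1 : ℝ) 2) (hc : 0 < c)
    (p : ℤ → ℝ) (hp0 : p 0 = 0)
    (hp : ∀ z : ℤ, z ≠ 0 → p z = c * |(z : ℝ)| ^ (-(1 + γ))) :
    ∃ C > 0, ∀ N : ℕ, 2 ≤ N → ∀ z : ℕ, 1 ≤ z → z ≤ N - 1 →
      |(-((z : ℝ) / N) * (N : ℝ) ^ γ * (∑' y : ℕ, if z ≤ y then p (y : ℤ) else 0)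
          + (1 - 1 / (N : ℝ) - (z : ℝ) / N) * (N : ℝ) ^ γ *
              (∑' y : ℕ, if N - z ≤ y then p (y : ℤ) else 0)
          + (N : ℝ) ^ (γ - 1) *
              ((∑' y : ℕ, if z ≤ y then (y : ℝ) * p (y : ℤ) else 0)
                - ∑' y : ℕ, if N - z ≤ y then (y : ℝ) * p (y : ℤ) else 0))|
        ≤ C * (((z : ℝ) / N) ^ (1 - γ) + (1 - (z : ℝ) / N) ^ (1 - γ)) := by
  obtain ⟨hγ1, hγ2⟩ := hγ
  have hγ0 : (0 : ℝ) < γ := by linarith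
  have hγ1' : (0 : ℝ) < γ - 1 := by linarith
  set K1 : ℝ := 1 + 1 / γ with hK1
  set K2 : ℝ := 1 + 1 / (γ - 1) with hK2
  have hK1p : 0 < K1 := by rw [hK1]; positivity
  have hK2p : 0 < K2 := by rw [hK2]; positivity
  have hP : ∀ y : ℕ, 1 ≤ y → p (y : ℤ) = c * (y : ℝ) ^ (-(1 + γ)) := by
    intro y hy
    have hy0 : ((y : ℤ) : ℝ) = (y : ℝ) := by push_cast; ring
    rw [hp (y : ℤ) (by exact_mod_cast (Nat.pos_of_ne_zero (by omega)).ne'), hy0,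
      abs_of_nonneg (Nat.cast_nonneg y)]
  have hpnn : ∀ y : ℕ, 0 ≤ p (y : ℤ) := by
    intro y
    rcases Nat.eq_zero_or_pos y with h | h
    · simp [h, hp0]
    · rw [hP y h]; positivity
  have hT1 : ∀ w : ℕ, 1 ≤ w →
      (∑' y : ℕ, if w ≤ y then p (y : ℤ) else 0) ≤ c * K1 * (w : ℝ) ^ (-γ) := by
    intro w hw
    have hrw : ∀ y : ℕ, (if w ≤ y then p (y : ℤ) else 0)
        = c * (if w ≤ y then ((y : ℝ)) ^ (-(1 + γ)) else 0) := by
      intro y; split_ifs with h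
      · exact hP y (le_trans hw h)
      · simp
    calc (∑' y : ℕ, if w ≤ y then p (y : ℤ) else 0)
        = c * ∑' y : ℕ, (if w ≤ y then ((y : ℝ)) ^ (-(1 + γ)) else 0) := by
          rw [tsum_congr hrw, tsum_mul_left]
      _ ≤ c * ((1 + 1 / γ) * (w : ℝ) ^ (-γ)) :=
          mul_le_mul_of_nonneg_left (tail_bound hγ0 hw) hc.le
      _ = c * K1 * (w : ℝ) ^ (-γ) := by rw [hK1]; ring
  have hT2 : ∀ w : ℕ, 1 ≤ w →
      (∑' y : ℕ, if w ≤ y then (y : ℝ) * p (y : ℤ) else 0)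
        ≤ c * K2 * (w : ℝ) ^ (1 - γ) := by
    intro w hw
    have hrw : ∀ y : ℕ, (if w ≤ y then (y : ℝ) * p (y : ℤ) else 0)
        = c * (if w ≤ y then ((y : ℝ)) ^ (-(1 + (γ - 1))) else 0) := by
      intro y; split_ifs with h
      · have hy1 : 1 ≤ y := le_trans hw h
        have hy0 : (0 : ℝ) < (y : ℝ) := by exact_mod_cast hy1
        rw [hP y hy1, show -(1 + (γ - 1)) = 1 + -(1 + γ) by ring, Real.rpow_add hy0,
          Real.rpow_one]
        ring
      · simp
    calc (∑' y : ℕ, if w ≤ y then (y : ℝ) * p (y : ℤ) else 0)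
        = c * ∑' y : ℕ, (if w ≤ y then ((y : ℝ)) ^ (-(1 + (γ - 1))) else 0) := by
          rw [tsum_congr hrw, tsum_mul_left]
      _ ≤ c * ((1 + 1 / (γ - 1)) * (w : ℝ) ^ (-(γ - 1))) :=
          mul_le_mul_of_nonneg_left (tail_bound hγ1' hw) hc.le
      _ = c * K2 * (w : ℝ) ^ (1 - γ) := by
          rw [hK2, show -(γ - 1) = 1 - γ by ring]; ring
  refine ⟨c * K1 + c * K2, by positivity, ?_⟩
  intro N hN z hz1 hz2
  have hzN : z + 1 ≤ N := by omega
  set w : ℕ := N - z with hwdef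
  have hw1 : 1 ≤ w := by omega
  have hNpos : (0 : ℝ) < (N : ℝ) := by exact_mod_cast (by omega : 0 < N)
  have ha0 : (0 : ℝ) < (z : ℝ) := by exact_mod_cast hz1
  have hb0 : (0 : ℝ) < (w : ℝ) := by exact_mod_cast hw1
  have hcast : ((w : ℕ) : ℝ) = (N : ℝ) - (z : ℝ) := by
    rw [hwdef, Nat.cast_sub (by omega : z ≤ N)]
  have h1x : 1 - (z : ℝ) / N = (w : ℝ) / N := by
    rw [hcast]; field_simp
  set S1 := ∑' y : ℕ, if z ≤ y then p (y : ℤ) else 0 with hS1d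
  set S2 := ∑' y : ℕ, if w ≤ y then p (y : ℤ) else 0 with hS2d
  set U1 := ∑' y : ℕ, if z ≤ y then (y : ℝ) * p (y : ℤ) else 0 with hU1d
  set U2 := ∑' y : ℕ, if w ≤ y then (y : ℝ) * p (y : ℤ) else 0 with hU2d
  have hS1n : 0 ≤ S1 := tsum_nonneg fun y => by
    split_ifs with h; exacts [hpnn y, le_rfl]
  have hS2n : 0 ≤ S2 := tsum_nonneg fun y => by
    split_ifs with h; exacts [hpnn y, le_rfl]
  have hU1n : 0 ≤ U1 := tsum_nonneg fun y => by
    split_ifs with h; exacts [mul_nonneg (Nat.cast_nonneg y) (hpnn y), le_rfl]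
  have hU2n : 0 ≤ U2 := tsum_nonneg fun y => by
    split_ifs with h; exacts [mul_nonneg (Nat.cast_nonneg y) (hpnn y), le_rfl]
  have hS1b : S1 ≤ c * K1 * (z : ℝ) ^ (-γ) := hT1 z hz1
  have hS2b : S2 ≤ c * K1 * (w : ℝ) ^ (-γ) := hT1 w hw1
  have hU1b : U1 ≤ c * K2 * (z : ℝ) ^ (1 - γ) := hT2 z hz1
  have hU2b : U2 ≤ c * K2 * (w : ℝ) ^ (1 - γ) := hT2 w hw1
  rw [h1x]
  set X := ((z : ℝ) / N) ^ (1 - γ) with hXd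
  set Y := ((w : ℝ) / N) ^ (1 - γ) with hYd
  have hX : X = ((z : ℝ) / N) * (N : ℝ) ^ γ * (z : ℝ) ^ (-γ) := by
    rw [hXd]; exact rpow_helper ha0 hNpos
  have hY : Y = ((w : ℝ) / N) * (N : ℝ) ^ γ * (w : ℝ) ^ (-γ) := by
    rw [hYd]; exact rpow_helper hb0 hNpos
  have hX2 : X = (z : ℝ) ^ (1 - γ) * (N : ℝ) ^ (γ - 1) := by
    rw [hXd]; exact rpow_helper2 ha0 hNpos
  have hY2 : Y = (w : ℝ) ^ (1 - γ) * (N : ℝ) ^ (γ - 1) := by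
    rw [hYd]; exact rpow_helper2 hb0 hNpos
  have hb1 : |(-((z : ℝ) / N) * (N : ℝ) ^ γ * S1)| ≤ c * K1 * X := by
    rw [abs_mul, abs_mul, abs_neg, abs_of_nonneg (by positivity : (0:ℝ) ≤ (z : ℝ) / N),
      abs_of_nonneg (Real.rpow_nonneg hNpos.le γ), abs_of_nonneg hS1n]
    calc (z : ℝ) / N * (N : ℝ) ^ γ * S1
        ≤ (z : ℝ) / N * (N : ℝ) ^ γ * (c * K1 * (z : ℝ) ^ (-γ)) := by
          apply mul_le_mul_of_nonneg_left hS1b (by positivity)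
      _ = c * K1 * X := by rw [hX]; ring
  have hcoefn : 0 ≤ 1 - 1 / (N : ℝ) - (z : ℝ) / N := by
    have h1 : 1 / (N : ℝ) + (z : ℝ) / N ≤ 1 := by
      rw [← add_div, div_le_one hNpos]
      have : (z : ℝ) + 1 ≤ (N : ℝ) := by exact_mod_cast hzN
      linarith
    linarith
  have hcoefb : 1 - 1 / (N : ℝ) - (z : ℝ) / N ≤ (w : ℝ) / N := by
    have e : ((N : ℝ) - (z : ℝ)) / (N : ℝ) = 1 - (z : ℝ) / N := by field_simp
    rw [hcast, e]
    have hpos : 0 < 1 / (N : ℝ) := by positivity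
    linarith
  have hb2 : |(1 - 1 / (N : ℝ) - (z : ℝ) / N) * (N : ℝ) ^ γ * S2| ≤ c * K1 * Y := by
    rw [abs_mul, abs_mul, abs_of_nonneg hcoefn,
      abs_of_nonneg (Real.rpow_nonneg hNpos.le γ), abs_of_nonneg hS2n]
    calc (1 - 1 / (N : ℝ) - (z : ℝ) / N) * (N : ℝ) ^ γ * S2
        ≤ ((w : ℝ) / N) * (N : ℝ) ^ γ * (c * K1 * (w : ℝ) ^ (-γ)) := by
          apply mul_le_mul
          · exact mul_le_mul_of_nonneg_right hcoefb (Real.rpow_nonneg hNpos.le γ)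
          · exact hS2b
          · exact hS2n
          · positivity
      _ = c * K1 * Y := by rw [hY]; ring
  have hb3 : |(N : ℝ) ^ (γ - 1) * (U1 - U2)| ≤ c * K2 * (X + Y) := by
    rw [abs_mul, abs_of_nonneg (Real.rpow_nonneg hNpos.le (γ - 1))]
    calc (N : ℝ) ^ (γ - 1) * |U1 - U2|
        ≤ (N : ℝ) ^ (γ - 1) * (c * K2 * (z : ℝ) ^ (1 - γ) + c * K2 * (w : ℝ) ^ (1 - γ)) := by
          apply mul_le_mul_of_nonneg_left _ (Real.rpow_nonneg hNpos.le _)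
          calc |U1 - U2| ≤ |U1| + |U2| := abs_sub _ _
            _ = U1 + U2 := by rw [abs_of_nonneg hU1n, abs_of_nonneg hU2n]
            _ ≤ _ := add_le_add hU1b hU2b
      _ = c * K2 * (X + Y) := by rw [hX2, hY2]; ring
  calc |(-((z : ℝ) / N) * (N : ℝ) ^ γ * S1
          + (1 - 1 / (N : ℝ) - (z : ℝ) / N) * (N : ℝ) ^ γ * S2
          + (N : ℝ) ^ (γ - 1) * (U1 - U2))|
      ≤ |(-((z : ℝ) / N) * (N : ℝ) ^ γ * S1
          + (1 - 1 / (N : ℝ) - (z : ℝ) / N) * (N : ℝ) ^ γ * S2)|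
        + |(N : ℝ) ^ (γ - 1) * (U1 - U2)| := abs_add_le _ _
    _ ≤ |(-((z : ℝ) / N) * (N : ℝ) ^ γ * S1)|
        + |(1 - 1 / (N : ℝ) - (z : ℝ) / N) * (N : ℝ) ^ γ * S2|
        + |(N : ℝ) ^ (γ - 1) * (U1 - U2)| := by
          have := abs_add_le (-((z : ℝ) / N) * (N : ℝ) ^ γ * S1)
            ((1 - 1 / (N : ℝ) - (z : ℝ) / N) * (N : ℝ) ^ γ * S2)
          linarith
    _ ≤ c * K1 * X + c * K1 * Y + c * K2 * (X + Y) := by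
          exact add_le_add (add_le_add hb1 hb2) hb3
    _ = (c * K1 + c * K2) * (X + Y) := by ring
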